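/- Let π2 : ℝ^n → ℝ^{n−k} be the projection to the last n−k coordinates and let τ : ℝ^{2n} → ℝ^{(n−k)+n} be the map (u, w) ↦ (π2(u), w). If C1, C2 ⊆ ℝ^n are cones in opposition with respect to the first k variables, then the set {(π2(u), v − u) : u ∈ C1, v ∈ C2} is a line-free cone in ℝ^{(n−k)+n}. -/

import Mathlib

/-- A cone in a real topological vector space: topologically closed and closed under
nonnegative linear combinations. -/
def IsCone {E : Type*} [AddCommGroup E] [Module ℝ E] [TopologicalSpace E] (C : Set E) : Prop :=
  IsClosed C ∧ ∀ u ∈ C, ∀ v ∈ C, ∀ l m : ℝ, 0 ≤ l → 0 ≤ m → l • u + m • v ∈ C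

/-- A cone is line-free if it contains no nonzero vector together with its opposite. -/
def IsLineFree {E : Type*} [AddCommGroup E] (C : Set E) : Prop :=
  ∀ u ∈ C, -u ∈ C → u = 0

open Filter Topology Bornology

/-- Nonnegative scalar multiples stay in a cone. -/
lemma IsCone.smul_mem {E : Type*} [AddCommGroup E] [Module ℝ E] [TopologicalSpace E]
    {C : Set E} (hC : IsCone C) {u : E} (hu : u ∈ C) {c : ℝ} (hc : 0 ≤ c) : c • u ∈ C := by
  have := hC.2 u hu u hu c 0 hc le_rfl
  simpa using this

/-- ℝⁿ is modelled as `(Fin k → ℝ) × (Fin m → ℝ)` with `n = k + m`; `π₂ = Prod.snd`.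
If `C1, C2` are line-free cones in opposition with respect to the first `k` variables,
then `{(π₂ u, v − u) : u ∈ C1, v ∈ C2}` is a line-free cone in `ℝ^{(n−k)+n}`. -/
theorem tau_star_lineFree_cone (k m : ℕ)
    (C1 C2 : Set ((Fin k → ℝ) × (Fin m → ℝ)))
    (hC1 : IsCone C1) (hC1' : IsLineFree C1) (hC2 : IsCone C2) (hC2' : IsLineFree C2)
    (hp1 : IsCone (Prod.snd '' C1) ∧ IsLineFree (Prod.snd '' C1))
    (hp2 : IsCone (Prod.snd '' C2) ∧ IsLineFree (Prod.snd '' C2))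
    (hopp : C1 ∩ C2 ∩ {p : (Fin k → ℝ) × (Fin m → ℝ) | p.2 = 0} = {0}) :
    IsCone {q : (Fin m → ℝ) × ((Fin k → ℝ) × (Fin m → ℝ)) |
        ∃ u ∈ C1, ∃ v ∈ C2, q = (u.2, v - u)} ∧
    IsLineFree {q : (Fin m → ℝ) × ((Fin k → ℝ) × (Fin m → ℝ)) |
        ∃ u ∈ C1, ∃ v ∈ C2, q = (u.2, v - u)} := by
  constructor
  · constructor
    · -- closedness
      apply IsSeqClosed.isClosed
      intro q Q hq hQ
      choose u hu v hv hquv using hq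
      -- bounds coming from the convergent sequence q
      obtain ⟨R, hR⟩ : ∃ R : ℝ, ∀ n, ‖q n‖ ≤ R := by
        obtain ⟨R, hR⟩ := (hQ.norm).bddAbove_range
        exact ⟨R, fun n => hR ⟨n, rfl⟩⟩
      have hs : ∀ n, ‖(u n).2‖ ≤ R := by
        intro n
        have h1 : (q n).1 = (u n).2 := by rw [hquv n]
        rw [← h1]
        exact (norm_fst_le _).trans (hR n)
      have ht : ∀ n, ‖v n - u n‖ ≤ R := by
        intro n
        have h1 : (q n).2 = v n - u n := by rw [hquv n]
        rw [← h1]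
        exact (norm_snd_le _).trans (hR n)
      by_cases hb : ∃ B : ℝ, ∀ n, ‖u n‖ ≤ B
      · -- bounded case: extract convergent subsequence of (u, v)
        obtain ⟨B, hB⟩ := hb
        have hBv : ∀ n, ‖v n‖ ≤ R + B := by
          intro n
          calc ‖v n‖ = ‖(v n - u n) + u n‖ := by ring_nf
            _ ≤ ‖v n - u n‖ + ‖u n‖ := norm_add_le _ _
            _ ≤ R + B := add_le_add (ht n) (hB n)
        have hmem : ∀ n, (u n, v n) ∈ Metric.closedBall
            (0 : ((Fin k → ℝ) × (Fin m → ℝ)) × ((Fin k → ℝ) × (Fin m → ℝ)))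
            (max B (R + B)) := by
          intro n
          rw [Metric.mem_closedBall, dist_zero_right]
          exact (Prod.norm_def _).trans_le (max_le_max (hB n) (hBv n))
        obtain ⟨P, _, φ, hφ, hconv⟩ :=
          tendsto_subseq_of_bounded Metric.isBounded_closedBall hmem
        have hu' : Filter.Tendsto (fun j => u (φ j)) atTop (𝓝 P.1) :=
          (continuous_fst.tendsto P).comp hconv
        have hv' : Filter.Tendsto (fun j => v (φ j)) atTop (𝓝 P.2) :=
          (continuous_snd.tendsto P).comp hconv
        have hP1 : P.1 ∈ C1 :=
          hC1.1.mem_of_tendsto hu' (Eventually.of_forall fun j => hu (φ j))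
        have hP2 : P.2 ∈ C2 :=
          hC2.1.mem_of_tendsto hv' (Eventually.of_forall fun j => hv (φ j))
        refine ⟨P.1, hP1, P.2, hP2, ?_⟩
        have hq1 : Filter.Tendsto (fun j => q (φ j)) atTop (𝓝 Q) :=
          hQ.comp hφ.tendsto_atTop
        have hq2 : Filter.Tendsto (fun j => q (φ j)) atTop (𝓝 (P.1.2, P.2 - P.1)) := by
          have : (fun j => q (φ j)) = fun j => ((u (φ j)).2, v (φ j) - u (φ j)) := by
            funext j; exact hquv (φ j)
          rw [this]
          exact (((continuous_snd.tendsto P.1).comp hu').prodMk_nhds (hv'.sub hu'))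
        exact tendsto_nhds_unique hq1 hq2
      · -- unbounded case: derive a contradiction
        exfalso
        push_neg at hb
        choose N hN using fun j : ℕ => hb j
        have hpos : ∀ j : ℕ, (0 : ℝ) < ‖u (N j)‖ := fun j =>
          lt_of_le_of_lt (by positivity) (hN j)
        set a : ℕ → (Fin k → ℝ) × (Fin m → ℝ) := fun j => (‖u (N j)‖)⁻¹ • u (N j) with ha
        have haC : ∀ j, a j ∈ C1 := fun j =>
          hC1.smul_mem (hu (N j)) (inv_nonneg.mpr (hpos j).le)
        have hanorm : ∀ j, a j ∈ Metric.sphere (0 : (Fin k → ℝ) × (Fin m → ℝ)) 1 := by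
          intro j
          rw [mem_sphere_zero_iff_norm, ha]
          simp [norm_smul, abs_of_pos (inv_pos.mpr (hpos j)),
            inv_mul_cancel₀ (hpos j).ne']
        obtain ⟨A, hAs, φ, hφ, hconv⟩ := (isCompact_sphere
            (0 : (Fin k → ℝ) × (Fin m → ℝ)) 1).tendsto_subseq hanorm
        -- the norms along the subsequence go to infinity
        have hMtop : Filter.Tendsto (fun j => ‖u (N (φ j))‖) atTop atTop := by
          apply tendsto_atTop_mono (f := fun j : ℕ => (j : ℝ))
          · intro j
            have h1 : (j : ℝ) ≤ (φ j : ℝ) := Nat.cast_le.mpr (hφ.le_apply)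
            exact h1.trans (hN (φ j)).le
          · exact tendsto_natCast_atTop_atTop
        have hA1 : A ∈ C1 :=
          hC1.1.mem_of_tendsto hconv (Eventually.of_forall fun j => haC (φ j))
        -- A ∈ C2
        have hzero : Filter.Tendsto
            (fun j => (‖u (N (φ j))‖)⁻¹ • (v (N (φ j)) - u (N (φ j)))) atTop (𝓝 0) := by
          apply squeeze_zero_norm (a := fun j => R / ‖u (N (φ j))‖)
          · intro j
            rw [norm_smul, norm_inv, norm_norm, div_eq_inv_mul]
            exact mul_le_mul_of_nonneg_left (ht _) (inv_nonneg.mpr (hpos _).le)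
          · exact tendsto_const_nhds.div_atTop hMtop
        have hbconv : Filter.Tendsto
            (fun j => (‖u (N (φ j))‖)⁻¹ • v (N (φ j))) atTop (𝓝 A) := by
          have heq : (fun j => (‖u (N (φ j))‖)⁻¹ • v (N (φ j)))
              = fun j => (a ∘ φ) j + (‖u (N (φ j))‖)⁻¹ • (v (N (φ j)) - u (N (φ j))) := by
            funext j
            simp only [ha, Function.comp_apply, smul_sub]
            abel
          rw [heq]
          simpa using hconv.add hzero
        have hA2 : A ∈ C2 :=
          hC2.1.mem_of_tendsto hbconv (Eventually.of_forall fun j =>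
            hC2.smul_mem (hv (N (φ j))) (inv_nonneg.mpr (hpos _).le))
        -- A.2 = 0
        have hA3 : A.2 = 0 := by
          have h1 : Filter.Tendsto (fun j => (a (φ j)).2) atTop (𝓝 A.2) :=
            (continuous_snd.tendsto A).comp hconv
          have h2 : Filter.Tendsto (fun j => (a (φ j)).2) atTop (𝓝 0) := by
            apply squeeze_zero_norm (a := fun j => R / ‖u (N (φ j))‖)
            · intro j
              simp only [ha, Prod.smul_snd]
              rw [norm_smul, norm_inv, norm_norm, div_eq_inv_mul]
              exact mul_le_mul_of_nonneg_left (hs _) (inv_nonneg.mpr (hpos _).le)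
            · exact tendsto_const_nhds.div_atTop hMtop
          exact tendsto_nhds_unique h1 h2
        have hA0 : A ∈ ({0} : Set ((Fin k → ℝ) × (Fin m → ℝ))) :=
          hopp ▸ ⟨⟨hA1, hA2⟩, hA3⟩
        have : ‖A‖ = 1 := mem_sphere_zero_iff_norm.mp hAs
        rw [Set.mem_singleton_iff.mp hA0] at this
        simp at this
    · -- cone combination
      rintro _ ⟨u1, hu1, v1, hv1, rfl⟩ _ ⟨u2, hu2, v2, hv2, rfl⟩ l mm hl hm
      refine ⟨l • u1 + mm • u2, hC1.2 _ hu1 _ hu2 l mm hl hm,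
        l • v1 + mm • v2, hC2.2 _ hv1 _ hv2 l mm hl hm, ?_⟩
      rw [Prod.ext_iff]
      constructor
      · simp
      · show l • (v1 - u1) + mm • (v2 - u2) = _
        simp only [smul_sub]
        abel
  · -- line-freeness
    rintro _ ⟨u, hu, v, hv, rfl⟩ hneg
    obtain ⟨u', hu', v', hv', heq⟩ := hneg
    have h2 : -u.2 = u'.2 := congrArg Prod.fst heq
    have h3 : -(v - u) = v' - u' := congrArg Prod.snd heq
    have hsum : u + u' = v + v' := by
      have : u - v = v' - u' := by rw [← h3]; abel
      have := sub_eq_sub_iff_add_eq_add.mp this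
      linear_combination (norm := abel) this
    have hw1 : u + u' ∈ C1 := by
      have := hC1.2 u hu u' hu' 1 1 zero_le_one zero_le_one
      simpa using this
    have hw2 : u + u' ∈ C2 := by
      rw [hsum]
      have := hC2.2 v hv v' hv' 1 1 zero_le_one zero_le_one
      simpa using this
    have hw3 : (u + u').2 = 0 := by
      show u.2 + u'.2 = 0
      rw [← h2]; abel
    have hw0 : u + u' = 0 := Set.mem_singleton_iff.mp (hopp ▸ ⟨⟨hw1, hw2⟩, hw3⟩)
    have hu0 : u = 0 := hC1' u hu (by
      have h : -u = u' := neg_eq_of_add_eq_zero_right hw0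
      rw [h]; exact hu')
    have hv0 : v = 0 := by
      have hvv : v + v' = 0 := hsum ▸ hw0
      exact hC2' v hv (by
        have h : -v = v' := neg_eq_of_add_eq_zero_right hvv
        rw [h]; exact hv')
    simp [hu0, hv0]
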